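/- (Theorem 2) Let β*_new minimize F(β) = (1/n_new) Σ_{i∈D_new} ℓ_i(β) + (λ/2)‖β‖², and let β̂ ∈ ℝ^d be any point with full gradient g(β̂) = (1/n_new) Σ_{i∈D_new} ∇ℓ_i(β̂) + λ β̂. Then for any η ∈ ℝ^d, ηᵀβ̂ − (λ⁻¹/2) ηᵀg(β̂) − (λ⁻¹/2)‖η‖‖g(β̂)‖ ≤ ηᵀβ*_new ≤ ηᵀβ̂ − (λ⁻¹/2) ηᵀg(β̂) + (λ⁻¹/2)‖η‖‖g(β̂)‖. -/

import Mathlib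

open InnerProductSpace

private lemma convexOn_finset_sum' {ι F : Type*} [NormedAddCommGroup F]
    [InnerProductSpace ℝ F] [CompleteSpace F] (t : Finset ι) (f : ι → F → ℝ)
    (h : ∀ i ∈ t, ConvexOn ℝ Set.univ (f i)) :
    ConvexOn ℝ Set.univ (fun x => ∑ i ∈ t, f i x) := by
  classical
  induction t using Finset.induction_on with
  | empty => simpa using convexOn_const (0 : ℝ) convex_univ
  | @insert a s ha ih =>
      simp only [Finset.sum_insert ha]
      exact (h a (Finset.mem_insert_self a s)).add
        (ih fun i hi => h i (Finset.mem_insert_of_mem hi))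

/-- First-order condition for a convex differentiable function. -/
private lemma convex_first_order {F : Type*} [NormedAddCommGroup F]
    [InnerProductSpace ℝ F] [CompleteSpace F] {f : F → ℝ} (hc : ConvexOn ℝ Set.univ f)
    {x G : F} (hG : HasGradientAt f G x) (y : F) :
    f x + ⟪G, y - x⟫_ℝ ≤ f y := by
  set φ : ℝ → ℝ := fun t => f (x + t • (y - x)) with hφ
  have hφc : ConvexOn ℝ Set.univ φ := by
    have := hc.comp_affineMap (AffineMap.lineMap x y : ℝ →ᵃ[ℝ] F)
    simp only [Set.preimage_univ] at this
    have e : φ = f ∘ AffineMap.lineMap x y := by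
      ext t
      simp only [φ, Function.comp, AffineMap.lineMap_apply_module]
      congr 1
      module
    rw [e]; exact this
  have hF : HasFDerivAt f (toDual ℝ F G) x := hG
  have hline : HasDerivAt (fun t : ℝ => x + t • (y - x)) (y - x) 0 := by
    simpa using ((hasDerivAt_id (0 : ℝ)).smul_const (y - x)).const_add x
  have hφ0 : HasDerivAt φ ⟪G, y - x⟫_ℝ 0 := by
    have hF' : HasFDerivAt f (toDual ℝ F G) (x + (0 : ℝ) • (y - x)) := by simpa using hF
    have := hF'.comp_hasDerivAt 0 hline
    simpa [φ, toDual_apply_apply, Function.comp_def] using this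
  have hslope := hφc.le_slope_of_hasDerivAt (Set.mem_univ (0 : ℝ))
    (Set.mem_univ (1 : ℝ)) one_pos hφ0
  have : ⟪G, y - x⟫_ℝ ≤ φ 1 - φ 0 := by simpa [slope_def_field] using hslope
  have h0 : φ 0 = f x := by simp [φ]
  have h1 : φ 1 = f y := by simp [φ]
  rw [h0, h1] at this
  linarith

theorem theorem2_bounds_from_suboptimal
    {d : ℕ} {ι : Type*} (D : Finset ι)
    (ℓ : ι → EuclideanSpace ℝ (Fin d) → ℝ)
    (hdiff : ∀ i ∈ D, Differentiable ℝ (ℓ i))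
    (hconv : ∀ i ∈ D, ConvexOn ℝ Set.univ (ℓ i))
    (lam : ℝ) (hlam : 0 < lam)
    (hD : 0 < D.card)
    (βnew βhat : EuclideanSpace ℝ (Fin d))
    (hmin : ∀ β, (1 / (D.card : ℝ)) * (∑ i ∈ D, ℓ i βnew) + (lam / 2) * ‖βnew‖ ^ 2 ≤
                 (1 / (D.card : ℝ)) * (∑ i ∈ D, ℓ i β) + (lam / 2) * ‖β‖ ^ 2)
    (g : EuclideanSpace ℝ (Fin d))
    (hg : g = (1 / (D.card : ℝ)) • (∑ i ∈ D, gradient (ℓ i) βhat) + lam • βhat)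
    (η : EuclideanSpace ℝ (Fin d)) :
    ⟪η, βhat⟫_ℝ - (lam⁻¹ / 2) * ⟪η, g⟫_ℝ - (lam⁻¹ / 2) * ‖η‖ * ‖g‖ ≤ ⟪η, βnew⟫_ℝ ∧
    ⟪η, βnew⟫_ℝ ≤ ⟪η, βhat⟫_ℝ - (lam⁻¹ / 2) * ⟪η, g⟫_ℝ + (lam⁻¹ / 2) * ‖η‖ * ‖g‖ := by
  let E := EuclideanSpace ℝ (Fin d)
  set c : ℝ := 1 / (D.card : ℝ) with hc
  set h : E → ℝ := fun β => c * ∑ i ∈ D, ℓ i β with hh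
  set q : E → ℝ := fun β => (lam / 2) * ‖β‖ ^ 2 with hq
  -- convexity of h
  have hhconv : ConvexOn ℝ Set.univ h := by
    have hcnn : (0 : ℝ) ≤ c := by positivity
    have := (convexOn_finset_sum' D ℓ hconv).smul hcnn
    simpa [h, smul_eq_mul] using this
  -- gradient of h at any point
  have hgradh : ∀ β : E, HasGradientAt h (c • ∑ i ∈ D, gradient (ℓ i) β) β := by
    intro β
    have hsum : HasFDerivAt (fun β => ∑ i ∈ D, ℓ i β)
        (∑ i ∈ D, toDual ℝ E (gradient (ℓ i) β)) β :=
      HasFDerivAt.fun_sum fun i hi => ((hdiff i hi).differentiableAt).hasGradientAt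
    have := hsum.const_mul c
    rw [hasGradientAt_iff_hasFDerivAt]
    refine this.congr_fderiv ?_
    simp [map_smul, map_sum]
  -- gradient of q
  have hgradq : ∀ β : E, HasGradientAt q (lam • β) β := by
    intro β
    rw [hasGradientAt_iff_hasFDerivAt]
    have := (hasStrictFDerivAt_norm_sq β).hasFDerivAt.const_mul (lam / 2)
    refine this.congr_fderiv ?_
    ext y
    simp [toDual_apply_apply, real_inner_smul_left, two_smul]
    ring
  -- the full objective
  set Φ : E → ℝ := fun β => h β + q β with hΦ
  have hgradΦ : ∀ β : E, HasGradientAt Φ ((c • ∑ i ∈ D, gradient (ℓ i) β) + lam • β) β := by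
    intro β
    have h1 : HasFDerivAt h (toDual ℝ _ (c • ∑ i ∈ D, gradient (ℓ i) β)) β := hgradh β
    have h2 : HasFDerivAt q (toDual ℝ _ (lam • β)) β := hgradq β
    have h3 := h1.add h2
    rw [hasGradientAt_iff_hasFDerivAt, map_add]
    exact h3
  -- gradient at minimizer is zero
  have hmin' : IsLocalMin Φ βnew := Filter.Eventually.of_forall fun β => hmin β
  have hΦnew : HasGradientAt Φ 0 βnew := by
    have hdΦ := hgradΦ βnew
    have h0 : fderiv ℝ Φ βnew = 0 := hmin'.fderiv_eq_zero
    have hfd : HasFDerivAt Φ (fderiv ℝ Φ βnew) βnew :=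
      hdΦ.differentiableAt.hasFDerivAt
    rw [h0] at hfd
    rw [hasGradientAt_iff_hasFDerivAt, map_zero]
    exact hfd
  have hkey : (c • ∑ i ∈ D, gradient (ℓ i) βnew) + lam • βnew = 0 :=
    (hgradΦ βnew).unique hΦnew
  -- gradient of h at βnew is -lam • βnew
  have hgradhnew : HasGradientAt h (-(lam • βnew)) βnew := by
    have := hgradh βnew
    rwa [eq_neg_of_add_eq_zero_left hkey] at this
  -- gradient of h at βhat is g - lam • βhat
  have hgradhhat : HasGradientAt h (g - lam • βhat) βhat := by
    have := hgradh βhat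
    rw [hg]; simpa using this
  -- two first-order inequalities
  have hA := convex_first_order hhconv hgradhnew βhat
  have hB := convex_first_order hhconv hgradhhat βnew
  -- combine
  set v : E := βnew - βhat with hv
  have hcomb : ⟪g, v⟫_ℝ + lam * ‖v‖ ^ 2 ≤ 0 := by
    have e1 : ⟪-(lam • βnew), βhat - βnew⟫_ℝ = lam * ⟪βnew, v⟫_ℝ := by
      rw [inner_neg_left, real_inner_smul_left]
      have : βhat - βnew = -v := by rw [hv]; abel
      rw [this, inner_neg_right]; ring
    have e2 : ⟪g - lam • βhat, βnew - βhat⟫_ℝ = ⟪g, v⟫_ℝ - lam * ⟪βhat, v⟫_ℝ := by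
      rw [inner_sub_left, real_inner_smul_left, hv]
    have e3 : lam * ⟪βnew, v⟫_ℝ - lam * ⟪βhat, v⟫_ℝ = lam * ‖v‖ ^ 2 := by
      rw [← mul_sub, ← inner_sub_left, ← hv, real_inner_self_eq_norm_sq]
    nlinarith [hA, hB, e1, e2, e3]
  -- norm bound on w = v + (lam⁻¹/2) • g
  set κ : ℝ := lam⁻¹ / 2 with hκ
  have hκpos : 0 < κ := by positivity
  set w : E := v + κ • g with hw
  have hnw : ‖w‖ ≤ κ * ‖g‖ := by
    have hsq : ‖w‖ ^ 2 ≤ (κ * ‖g‖) ^ 2 := by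
      have expand : ‖w‖ ^ 2 = ‖v‖ ^ 2 + 2 * κ * ⟪g, v⟫_ℝ + κ ^ 2 * ‖g‖ ^ 2 := by
        rw [hw, ← real_inner_self_eq_norm_sq, real_inner_add_add_self, real_inner_smul_right,
          real_inner_smul_left, real_inner_smul_right, real_inner_self_eq_norm_sq,
          real_inner_self_eq_norm_sq, real_inner_comm v g]
        ring
      have h2κ : 2 * κ * lam = 1 := by
        rw [hκ]; field_simp
      nlinarith [hcomb, mul_pos hκpos hκpos]
    have := Real.sqrt_le_sqrt hsq
    rwa [Real.sqrt_sq (norm_nonneg w), Real.sqrt_sq (by positivity)] at this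
  -- final combination via Cauchy-Schwarz
  have hβ : βnew = βhat - κ • g + w := by
    rw [hw, hv]; abel
  have hin : ⟪η, βnew⟫_ℝ = ⟪η, βhat⟫_ℝ - κ * ⟪η, g⟫_ℝ + ⟪η, w⟫_ℝ := by
    rw [hβ, inner_add_right, inner_sub_right, real_inner_smul_right]
  have hcs : |⟪η, w⟫_ℝ| ≤ ‖η‖ * ‖w‖ := abs_real_inner_le_norm η w
  have hbound : ‖η‖ * ‖w‖ ≤ κ * ‖η‖ * ‖g‖ := by
    have := mul_le_mul_of_nonneg_left hnw (norm_nonneg η)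
    linarith [this]
  have habs := abs_le.mp hcs
  constructor
  · rw [hin]; linarith [habs.1, habs.2]
  · rw [hin]; linarith [habs.1, habs.2]
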